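/- Let n, p ≥ 1, let Φ be a real n×p matrix, W a symmetric positive semidefinite real n×n matrix, θ₀ ∈ ℝ^p with support S = {j : θ₀,ⱼ ≠ 0}, ε ∈ ℝ^n, y = Φθ₀ + ε, and λ > 0. Suppose θ̂ ∈ ℝ^p satisfies the basic inequality (1/(2n))·(y − Φθ̂)ᵀW(y − Φθ̂) + λ‖θ̂‖₁ ≤ (1/(2n))·(y − Φθ₀)ᵀW(y − Φθ₀) + λ‖θ₀‖₁, and suppose ‖ΦᵀWε/n‖∞ ≤ λ/2. Then, writing δ = θ̂ − θ₀, one has (1/n)·δᵀΦᵀWΦδ ≤ 3λ·‖δ_S‖₁. -/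

import Mathlib

open Matrix Finset

/-- Quadratic-form bound in display (A.3): under the basic inequality and the
noise bound, `(1/n) δᵀΦᵀWΦδ ≤ 3λ‖δ_S‖₁` for `δ = θ̂ − θ₀`. -/
theorem lasso_quadratic_form_bound
    (n p : ℕ) (hn : 1 ≤ n) (hp : 1 ≤ p)
    (Φ : Matrix (Fin n) (Fin p) ℝ) (W : Matrix (Fin n) (Fin n) ℝ)
    (hW : W.PosSemidef)
    (θ0 θhat : Fin p → ℝ)
    (S : Finset (Fin p)) (hS : ∀ j, j ∈ S ↔ θ0 j ≠ 0)
    (ε : Fin n → ℝ) (y : Fin n → ℝ) (hy : y = Φ.mulVec θ0 + ε)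
    (lam : ℝ) (hlam : 0 < lam)
    (hbasic :
      (1 / (2 * (n : ℝ))) * ((y - Φ.mulVec θhat) ⬝ᵥ W.mulVec (y - Φ.mulVec θhat))
          + lam * ∑ j, |θhat j|
        ≤ (1 / (2 * (n : ℝ))) * ((y - Φ.mulVec θ0) ⬝ᵥ W.mulVec (y - Φ.mulVec θ0))
          + lam * ∑ j, |θ0 j|)
    (hnoise : ∀ j, |(Φᵀ.mulVec (W.mulVec ε)) j / (n : ℝ)| ≤ lam / 2) :
    (1 / (n : ℝ)) * ((θhat - θ0) ⬝ᵥ (Φᵀ * W * Φ).mulVec (θhat - θ0))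
      ≤ 3 * lam * ∑ j ∈ S, |θhat j - θ0 j| := by
  have hn' : (0:ℝ) < n := by exact_mod_cast hn
  set δ : Fin p → ℝ := θhat - θ0 with hδ
  set v : Fin n → ℝ := Φ.mulVec δ with hv
  have hWsymm : Wᵀ = W := hW.1
  have hsym : ∀ a b : Fin n → ℝ, a ⬝ᵥ W.mulVec b = b ⬝ᵥ W.mulVec a := by
    intro a b
    rw [Matrix.dotProduct_mulVec, ← Matrix.mulVec_transpose, hWsymm, dotProduct_comm]
  have hres0 : y - Φ.mulVec θ0 = ε := by rw [hy]; abel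
  have hres : y - Φ.mulVec θhat = ε - v := by
    rw [hy, hv, hδ, Matrix.mulVec_sub]; abel
  set a : Fin p → ℝ := Φᵀ.mulVec (W.mulVec ε) with ha
  set c : ℝ := a ⬝ᵥ δ with hc
  have hcross : v ⬝ᵥ W.mulVec ε = c := by
    rw [hc, ha, dotProduct_comm, Matrix.dotProduct_mulVec,
      ← Matrix.mulVec_transpose]
  have hexp : (ε - v) ⬝ᵥ W.mulVec (ε - v)
      = ε ⬝ᵥ W.mulVec ε - 2 * c + v ⬝ᵥ W.mulVec v := by
    rw [Matrix.mulVec_sub, sub_dotProduct, dotProduct_sub,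
      dotProduct_sub, hsym ε v, hcross]; ring
  have hQ : δ ⬝ᵥ (Φᵀ * W * Φ).mulVec δ = v ⬝ᵥ W.mulVec v := by
    rw [← Matrix.mulVec_mulVec, ← Matrix.mulVec_mulVec, Matrix.dotProduct_mulVec,
      Matrix.vecMul_transpose, ← hv]
  set A : ℝ := ∑ j ∈ S, |δ j| with hA
  set B : ℝ := ∑ j ∈ Sᶜ, |δ j| with hB
  have hBnn : 0 ≤ B := Finset.sum_nonneg fun j _ => abs_nonneg _
  -- bound on the cross term
  have hcb : c ≤ (n : ℝ) * (lam / 2) * (A + B) := by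
    have habs : ∀ j, |a j| ≤ (n : ℝ) * (lam / 2) := by
      intro j
      have h := hnoise j
      rw [abs_div, abs_of_pos hn', div_le_iff₀ hn'] at h
      linarith [h]
    calc c ≤ |c| := le_abs_self _
      _ ≤ ∑ j, |a j * δ j| := by
          rw [hc, dotProduct]; exact Finset.abs_sum_le_sum_abs _ _
      _ ≤ ∑ j, (n : ℝ) * (lam / 2) * |δ j| := by
          apply Finset.sum_le_sum
          intro j _
          rw [abs_mul]
          exact mul_le_mul_of_nonneg_right (habs j) (abs_nonneg _)
      _ = (n : ℝ) * (lam / 2) * (A + B) := by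
          rw [← Finset.mul_sum, hA, hB, Finset.sum_add_sum_compl]
  -- ℓ1 inequality
  have hθ0zero : ∀ j ∈ Sᶜ, θ0 j = 0 := by
    intro j hj
    by_contra h
    exact (Finset.mem_compl.mp hj) ((hS j).mpr h)
  have hl1 : (∑ j, |θ0 j|) - (∑ j, |θhat j|) ≤ A - B := by
    have hsplit0 : ∑ j, |θ0 j| = ∑ j ∈ S, |θ0 j| + ∑ j ∈ Sᶜ, |θ0 j| :=
      (Finset.sum_add_sum_compl S _).symm
    have hsplith : ∑ j, |θhat j| = ∑ j ∈ S, |θhat j| + ∑ j ∈ Sᶜ, |θhat j| :=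
      (Finset.sum_add_sum_compl S _).symm
    have hzero : ∑ j ∈ Sᶜ, |θ0 j| = 0 := by
      apply Finset.sum_eq_zero
      intro j hj
      rw [hθ0zero j hj, abs_zero]
    have hBc : ∑ j ∈ Sᶜ, |θhat j| = B := by
      rw [hB]
      apply Finset.sum_congr rfl
      intro j hj
      simp [hδ, Pi.sub_apply, hθ0zero j hj]
    have hSle : ∑ j ∈ S, |θ0 j| - ∑ j ∈ S, |θhat j| ≤ A := by
      rw [hA, ← Finset.sum_sub_distrib]
      apply Finset.sum_le_sum
      intro j _
      calc |θ0 j| - |θhat j| ≤ |θ0 j - θhat j| := abs_sub_abs_le_abs_sub _ _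
        _ = |δ j| := by rw [abs_sub_comm]; simp [hδ, Pi.sub_apply]
    linarith
  -- combine via the basic inequality
  have key : v ⬝ᵥ W.mulVec v
      ≤ 2 * c + 2 * (n : ℝ) * lam * ((∑ j, |θ0 j|) - ∑ j, |θhat j|) := by
    have h := hbasic
    rw [hres, hres0, hexp] at h
    have hne : (n : ℝ) ≠ 0 := ne_of_gt hn'
    field_simp at h
    have h2 := mul_le_mul_of_nonneg_right h (show (0:ℝ) ≤ 2 * n by positivity)
    nlinarith [h2]
  have hmul : 2 * (n : ℝ) * lam * ((∑ j, |θ0 j|) - ∑ j, |θhat j|)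
      ≤ 2 * (n : ℝ) * lam * (A - B) :=
    mul_le_mul_of_nonneg_left hl1 (by positivity)
  have hrhs : ∑ j ∈ S, |θhat j - θ0 j| = A := by
    rw [hA]
    apply Finset.sum_congr rfl
    intro j _
    simp [hδ, Pi.sub_apply]
  rw [hQ, hrhs, one_div, inv_mul_le_iff₀ hn']
  nlinarith [key, hcb, hmul, mul_nonneg (mul_nonneg hn'.le hlam.le) hBnn]
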